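/- Let Z_F : ℂ → ℂ and Z_K : ℂ → ℂ satisfy the completed-zeta axioms with residues r_F and r_K respectively. Then (s−1/2)²·( Z_F(s+1/2)·Z_K(s+1/2) + Z_F(s−1/2)·Z_K(s+1/2) + Z_F(s+1/2)·Z_K(s−1/2) + Z_F(s−1/2)·Z_K(s−1/2) )·Z_F(2s) tends to 0 as s → 1/2 along s ≠ 1/2. (Each of the four summands multiplied by Z_F(2s) has a pole of order 3 at s = 1/2, but the Laurent coefficients of order −3 and −2 cancel in the sum; this is the cancellation of the order-3 poles of the four intertwining operators indexed by {w₍₂₁₃₂₎, w₍₂₁₃₂₁₎, w₍₂₁₃₂₃₎, w₍₂₁₃₂₁₃₎} in the case E = F×K at s = 1/2 with trivial character, applied with Z_F = ẑ_F and Z_K = ẑ_K.) -/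

import Mathlib

open Filter Topology

lemma completed_zeta_sum_limit (Z : ℂ → ℂ) (r : ℝ)
    (hdiff : ∀ s : ℂ, s ≠ 0 → s ≠ 1 → DifferentiableAt ℂ Z s)
    (hres : Tendsto (fun s : ℂ => (s - 1) * Z s) (𝓝[≠] 1) (𝓝 (r : ℂ))) :
    ∃ c : ℂ, Tendsto (fun t : ℂ => Z (1 + t) + Z (1 - t)) (𝓝[≠] 0) (𝓝 c) := by
  set g : ℂ → ℂ := fun s => (s - 1) * Z s with hg
  set h : ℂ → ℂ := Function.update g 1 (r : ℂ) with hh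
  have hcont : ContinuousAt h 1 := continuousAt_update_same.2 hres
  have hd : ∀ᶠ z in 𝓝[≠] (1:ℂ), DifferentiableAt ℂ h z := by
    have h0 : {z : ℂ | z ≠ 0} ∈ 𝓝 (1:ℂ) := isOpen_ne.mem_nhds (by norm_num)
    filter_upwards [nhdsWithin_le_nhds h0, self_mem_nhdsWithin] with z hz0 hz1
    have hgz : DifferentiableAt ℂ g z :=
      ((differentiableAt_id.sub_const 1).mul (hdiff z hz0 hz1))
    apply hgz.congr_of_eventuallyEq
    filter_upwards [isOpen_ne.mem_nhds hz1] with w hw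
    exact Function.update_of_ne hw _ _
  have hdh : DifferentiableAt ℂ h 1 :=
    (Complex.analyticAt_of_differentiable_on_punctured_nhds_of_continuousAt hd
      hcont).differentiableAt
  set F : ℂ → ℂ := fun t => h (1 + t) - h (1 - t) with hF
  have h1 : HasDerivAt (fun t : ℂ => h (1 + t)) (deriv h 1) 0 := by
    have inner : HasDerivAt (fun t : ℂ => 1 + t) 1 0 := by
      simpa using (hasDerivAt_id (0:ℂ)).const_add 1
    have houter : HasDerivAt h (deriv h 1) ((fun t : ℂ => 1 + t) 0) := by
      simpa using hdh.hasDerivAt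
    have := houter.comp 0 inner
    rw [mul_one] at this
    exact this
  have h2 : HasDerivAt (fun t : ℂ => h (1 - t)) (-deriv h 1) 0 := by
    have inner : HasDerivAt (fun t : ℂ => 1 - t) (-1) 0 := (hasDerivAt_id (0:ℂ)).const_sub 1
    have : HasDerivAt h (deriv h 1) ((fun t : ℂ => 1 - t) 0) := by simpa using hdh.hasDerivAt
    have h3 := this.comp 0 inner
    rw [mul_neg_one] at h3
    exact h3
  have hFd : HasDerivAt F (deriv h 1 - -deriv h 1) 0 := h1.sub h2
  have hslope : Tendsto (slope F 0) (𝓝[≠] 0) (𝓝 (deriv h 1 - -deriv h 1)) :=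
    hasDerivAt_iff_tendsto_slope.1 hFd
  refine ⟨deriv h 1 - -deriv h 1, hslope.congr' ?_⟩
  filter_upwards [self_mem_nhdsWithin] with t (ht : t ≠ 0)
  have e1 : h (1 + t) = t * Z (1 + t) := by
    rw [hh, Function.update_of_ne (by simpa using ht)]
    simp [hg]
  have e2 : h (1 - t) = -t * Z (1 - t) := by
    rw [hh, Function.update_of_ne (by intro hc; apply ht; linear_combination -hc)]
    simp only [hg]; ring
  have hF0 : F 0 = 0 := by simp [hF]
  rw [slope_def_field, hF0]
  show ((fun t => h (1 + t) - h (1 - t)) t - 0) / (t - 0) = _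
  simp only
  rw [e1, e2]
  field_simp
  ring

theorem completed_zeta_FK_order3_cancellation (Z_F Z_K : ℂ → ℂ) (r_F r_K : ℝ)
    (hdiff_F : ∀ s : ℂ, s ≠ 0 → s ≠ 1 → DifferentiableAt ℂ Z_F s)
    (hfe_F : ∀ s : ℂ, Z_F (1 - s) = Z_F s)
    (hr_F : 0 < r_F)
    (hres_F : Tendsto (fun s : ℂ => (s - 1) * Z_F s) (𝓝[≠] 1) (𝓝 (r_F : ℂ)))
    (hdiff_K : ∀ s : ℂ, s ≠ 0 → s ≠ 1 → DifferentiableAt ℂ Z_K s)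
    (hfe_K : ∀ s : ℂ, Z_K (1 - s) = Z_K s)
    (hr_K : 0 < r_K)
    (hres_K : Tendsto (fun s : ℂ => (s - 1) * Z_K s) (𝓝[≠] 1) (𝓝 (r_K : ℂ))) :
    Tendsto (fun s : ℂ => (s - 1/2)^2 *
      (Z_F (s + 1/2) * Z_K (s + 1/2) + Z_F (s - 1/2) * Z_K (s + 1/2) +
        Z_F (s + 1/2) * Z_K (s - 1/2) + Z_F (s - 1/2) * Z_K (s - 1/2)) * Z_F (2*s))
      (𝓝[≠] (1/2)) (𝓝 0) := by
  obtain ⟨c_F, hcF⟩ := completed_zeta_sum_limit Z_F r_F hdiff_F hres_F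
  obtain ⟨c_K, hcK⟩ := completed_zeta_sum_limit Z_K r_K hdiff_K hres_K
  -- shift map s ↦ s - 1/2 : 𝓝[≠] (1/2) → 𝓝[≠] 0
  have hshift : Tendsto (fun s : ℂ => s - 1/2) (𝓝[≠] (1/2)) (𝓝[≠] 0) := by
    apply tendsto_nhdsWithin_of_tendsto_nhds_of_eventually_within
    · have : Tendsto (fun s : ℂ => s - 1/2) (𝓝 (1/2)) (𝓝 (1/2 - 1/2)) :=
        (continuous_id.sub continuous_const).tendsto _
      simpa using this.mono_left nhdsWithin_le_nhds
    · filter_upwards [self_mem_nhdsWithin] with s hs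
      simpa [sub_eq_zero] using hs
  -- double map s ↦ 2 s : 𝓝[≠] (1/2) → 𝓝[≠] 1
  have hdouble : Tendsto (fun s : ℂ => 2 * s) (𝓝[≠] (1/2)) (𝓝[≠] 1) := by
    apply tendsto_nhdsWithin_of_tendsto_nhds_of_eventually_within
    · have : Tendsto (fun s : ℂ => 2 * s) (𝓝 (1/2)) (𝓝 (2 * (1/2))) :=
        (continuous_const.mul continuous_id).tendsto _
      simpa [two_mul] using this.mono_left nhdsWithin_le_nhds
    · filter_upwards [self_mem_nhdsWithin] with s hs
      intro hc
      exact hs (by simp only [Set.mem_singleton_iff] at *; linear_combination hc / 2)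
  have hAF : Tendsto (fun s : ℂ => Z_F (s + 1/2) + Z_F (s - 1/2)) (𝓝[≠] (1/2)) (𝓝 c_F) := by
    refine (hcF.comp hshift).congr fun s => ?_
    simp only [Function.comp]
    rw [show (1 : ℂ) + (s - 1/2) = s + 1/2 by ring, hfe_F (s - 1/2)]
  have hAK : Tendsto (fun s : ℂ => Z_K (s + 1/2) + Z_K (s - 1/2)) (𝓝[≠] (1/2)) (𝓝 c_K) := by
    refine (hcK.comp hshift).congr fun s => ?_
    simp only [Function.comp]
    rw [show (1 : ℂ) + (s - 1/2) = s + 1/2 by ring, hfe_K (s - 1/2)]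
  have hB : Tendsto (fun s : ℂ => (2 * s - 1) * Z_F (2 * s)) (𝓝[≠] (1/2)) (𝓝 (r_F : ℂ)) :=
    (hres_F.comp hdouble).congr fun s => rfl
  have hzero : Tendsto (fun s : ℂ => s - 1/2) (𝓝[≠] (1/2)) (𝓝 0) := hshift.mono_right nhdsWithin_le_nhds
  have hprod : Tendsto (fun s : ℂ => (s - 1/2) * (Z_F (s + 1/2) + Z_F (s - 1/2)) *
      (Z_K (s + 1/2) + Z_K (s - 1/2)) * ((2 * s - 1) * Z_F (2 * s)))
      (𝓝[≠] (1/2)) (𝓝 (0 * c_F * c_K * (r_F : ℂ))) :=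
    ((hzero.mul hAF).mul hAK).mul hB
  rw [show (0 : ℂ) * c_F * c_K * (r_F : ℂ) = 0 by ring] at hprod
  have : Tendsto (fun s : ℂ => (2 : ℂ)⁻¹ * ((s - 1/2) * (Z_F (s + 1/2) + Z_F (s - 1/2)) *
      (Z_K (s + 1/2) + Z_K (s - 1/2)) * ((2 * s - 1) * Z_F (2 * s))))
      (𝓝[≠] (1/2)) (𝓝 ((2 : ℂ)⁻¹ * 0)) := hprod.const_mul _
  rw [mul_zero] at this
  refine this.congr fun s => ?_
  ring
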